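/- Let (X_n) be a sequence of positive-integer-valued random variables, and for each n let (X_{i,n})_{i≥1} be identically distributed centered random variables, independent of X_n, with sup_{i,n} E[X_{i,n}^2] < ∞ (where additionally for each n the family (X_{i,n})_i is such that E[(∑_{i=1}^{k} X_{i,n})^2] ≤ k·sup E[X_{i,n}^2] for all k, e.g. pairwise uncorrelated). Then (1/X_n)·∑_{i=1}^{X_n} X_{i,n} → 0 almost surely on the event {liminf_n (1/n)·log X_n > 0}. -/

import Mathlib

open MeasureTheory ProbabilityTheory Filter

/-- Conditional law of large numbers. If `(X n)` are positive-integer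
valued random variables and, for each `n`, `(Y i n)` are identically distributed
centered random variables independent of `X n`, with uniformly bounded second
moments and `E[(∑_{i<k} Y i n)²] ≤ k·C` (e.g. pairwise uncorrelated), then
`(1/X n)·∑_{i<X n} Y i n → 0` almost surely on the event
`{liminf (log X n)/n > 0}` (expressed by its eventual-bound characterization). -/
theorem stmt12 {Ω : Type*} [MeasurableSpace Ω] (μ : Measure Ω) [IsProbabilityMeasure μ]
    (X : ℕ → Ω → ℕ) (hXmeas : ∀ n, Measurable (X n)) (hXpos : ∀ n ω, 1 ≤ X n ω)
    (Y : ℕ → ℕ → Ω → ℝ) (hYmeas : ∀ i n, Measurable (Y i n))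
    (hYint : ∀ i n, Integrable (Y i n) μ)
    (hYsq : ∀ i n, Integrable (fun ω => (Y i n ω) ^ 2) μ)
    (hYcentered : ∀ i n, ∫ ω, Y i n ω ∂μ = 0)
    (hYid : ∀ i j n, IdentDistrib (Y i n) (Y j n) μ μ)
    (C : ℝ) (hC : ∀ i n, ∫ ω, (Y i n ω) ^ 2 ∂μ ≤ C)
    (hsum2 : ∀ n k, ∫ ω, (∑ i ∈ Finset.range k, Y i n ω) ^ 2 ∂μ ≤ k * C)
    (hindep : ∀ n, Indep (MeasurableSpace.comap (X n) inferInstance)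
      (⨆ i, MeasurableSpace.comap (Y i n) inferInstance) μ) :
    ∀ᵐ ω ∂μ,
      (∃ c : ℝ, 0 < c ∧ ∀ᶠ n : ℕ in atTop, c * n ≤ Real.log (X n ω)) →
      Tendsto (fun n : ℕ => (∑ i ∈ Finset.range (X n ω), Y i n ω) / (X n ω))
        atTop (nhds 0) := by
  have hC0 : 0 ≤ C := le_trans (integral_nonneg fun ω => sq_nonneg _) (hC 0 0)
  -- Chebyshev's inequality for the partial sums
  have cheb : ∀ n k (ε : ℝ), 0 < ε → 1 ≤ k →
      μ {ω | ε * k ≤ |∑ i ∈ Finset.range k, Y i n ω|}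
        ≤ ENNReal.ofReal (C / (ε ^ 2 * k)) := by
    intro n k ε hε hk
    have hkR : (0:ℝ) < k := by exact_mod_cast hk
    have hSmeas : Measurable (fun ω => ∑ i ∈ Finset.range k, Y i n ω) :=
      Finset.measurable_sum _ fun i _ => hYmeas i n
    have hint : Integrable (fun ω => (∑ i ∈ Finset.range k, Y i n ω) ^ 2) μ := by
      have hmem : MemLp (fun ω => ∑ i ∈ Finset.range k, Y i n ω) 2 μ :=
        memLp_finset_sum (Finset.range k)
          (fun i (_ : i ∈ Finset.range k) =>
            (memLp_two_iff_integrable_sq (hYmeas i n).aestronglyMeasurable).mpr (hYsq i n))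
      exact (memLp_two_iff_integrable_sq hSmeas.aestronglyMeasurable).mp hmem
    have hsub : {ω | ε * k ≤ |∑ i ∈ Finset.range k, Y i n ω|}
        ⊆ {ω | (ε * k) ^ 2 ≤ (∑ i ∈ Finset.range k, Y i n ω) ^ 2} := by
      intro ω hω
      simp only [Set.mem_setOf_eq] at hω ⊢
      calc (ε * k) ^ 2 ≤ |∑ i ∈ Finset.range k, Y i n ω| ^ 2 :=
            pow_le_pow_left₀ (by positivity) hω 2
        _ = (∑ i ∈ Finset.range k, Y i n ω) ^ 2 := sq_abs _
    have hmark := mul_meas_ge_le_integral_of_nonneg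
      (ae_of_all μ fun ω => sq_nonneg (∑ i ∈ Finset.range k, Y i n ω)) hint ((ε * k) ^ 2)
    have hεk : (0:ℝ) < (ε * k) ^ 2 := by positivity
    have htoReal : (μ {ω | (ε * k) ^ 2
        ≤ (∑ i ∈ Finset.range k, Y i n ω) ^ 2}).toReal ≤ C / (ε ^ 2 * k) := by
      have h1 : (ε * k) ^ 2 * (μ {ω | (ε * k) ^ 2
          ≤ (∑ i ∈ Finset.range k, Y i n ω) ^ 2}).toReal ≤ k * C :=
        hmark.trans (hsum2 n k)
      have ht0 : 0 ≤ (μ {ω | (ε * k) ^ 2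
          ≤ (∑ i ∈ Finset.range k, Y i n ω) ^ 2}).toReal := ENNReal.toReal_nonneg
      rw [le_div_iff₀ (by positivity)]
      nlinarith [h1, hkR, ht0]
    calc μ {ω | ε * k ≤ |∑ i ∈ Finset.range k, Y i n ω|}
        ≤ μ {ω | (ε * k) ^ 2 ≤ (∑ i ∈ Finset.range k, Y i n ω) ^ 2} :=
          measure_mono hsub
      _ ≤ ENNReal.ofReal (C / (ε ^ 2 * k)) := by
          rw [ENNReal.le_ofReal_iff_toReal_le (measure_ne_top μ _) (by positivity)]
          exact htoReal
  -- the bad events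
  set B : ℕ → ℝ → ℝ → Set Ω := fun n q ε =>
    {ω | Real.exp (q * n) ≤ (X n ω : ℝ) ∧
      ε * (X n ω : ℝ) ≤ |∑ i ∈ Finset.range (X n ω), Y i n ω|} with hB
  -- measure bound on bad events via independence
  have hBbound : ∀ (n : ℕ) (q ε : ℝ), 0 < q → 0 < ε →
      μ (B n q ε) ≤ ENNReal.ofReal ((C / ε ^ 2) * Real.exp (-q * n)) := by
    intro n q ε hq hε
    classical
    set A : ℕ → Set Ω := fun k => {ω | ε * k ≤ |∑ i ∈ Finset.range k, Y i n ω|} with hA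
    set D : ℕ → Set Ω := fun k =>
      if Real.exp (q * n) ≤ (k : ℝ) then X n ⁻¹' {k} ∩ A k else ∅ with hD
    have hBsub : B n q ε ⊆ ⋃ k, D k := by
      intro ω hω
      refine Set.mem_iUnion.mpr ⟨X n ω, ?_⟩
      rw [hD]
      simp only [hω.1, if_true]
      exact ⟨rfl, hω.2⟩
    have hDle : ∀ k, μ (D k) ≤ μ (X n ⁻¹' {k}) * ENNReal.ofReal ((C / ε ^ 2) * Real.exp (-q * n)) := by
      intro k
      rw [hD]
      by_cases hk : Real.exp (q * n) ≤ (k : ℝ)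
      · simp only [hk, if_true]
        have hk1 : 1 ≤ k := by
          have : (1:ℝ) ≤ (k:ℝ) := le_trans (Real.one_le_exp (by positivity)) hk
          exact_mod_cast this
        -- independence step
        have hmul : μ (X n ⁻¹' {k} ∩ A k) = μ (X n ⁻¹' {k}) * μ (A k) := by
          have h2 : ∀ i, Measurable[⨆ i, MeasurableSpace.comap (Y i n) inferInstance] (Y i n) :=
            fun i => measurable_iff_comap_le.mpr (le_iSup (fun i => MeasurableSpace.comap (Y i n) inferInstance) i)
          have hS2 : Measurable[⨆ i, MeasurableSpace.comap (Y i n) inferInstance]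
              (fun ω => ∑ i ∈ Finset.range k, Y i n ω) :=
            Finset.measurable_sum _ fun i _ => h2 i
          have hset : MeasurableSet {x : ℝ | ε * (k:ℝ) ≤ |x|} :=
            measurable_abs measurableSet_Ici
          have hA2 : MeasurableSet[⨆ i, MeasurableSpace.comap (Y i n) inferInstance] (A k) :=
            hS2 hset
          exact (Indep_iff _ _ _).1 (hindep n) _ _
            ⟨{k}, measurableSet_singleton k, rfl⟩ hA2
        rw [hmul]
        refine mul_le_mul_right ?_ _
        calc μ (A k) ≤ ENNReal.ofReal (C / (ε ^ 2 * k)) := cheb n k ε hε hk1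
          _ ≤ ENNReal.ofReal ((C / ε ^ 2) * Real.exp (-q * n)) := by
              apply ENNReal.ofReal_le_ofReal
              have hkinv : ((k:ℝ))⁻¹ ≤ (Real.exp (q * n))⁻¹ :=
                inv_anti₀ (Real.exp_pos _) hk
              calc C / (ε ^ 2 * k) = (C / ε ^ 2) * ((k:ℝ))⁻¹ := by
                    rw [div_mul_eq_div_div, div_eq_mul_inv]
                _ ≤ (C / ε ^ 2) * (Real.exp (q * n))⁻¹ :=
                    mul_le_mul_of_nonneg_left hkinv (by positivity)
                _ = (C / ε ^ 2) * Real.exp (-q * n) := by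
                    rw [← Real.exp_neg, neg_mul]
      · simp [hk]
    have hsum1 : ∑' k, μ (X n ⁻¹' {k}) = 1 := by
      have hdisj : Pairwise (Function.onFun Disjoint fun k => X n ⁻¹' {k}) := by
        intro a b hab
        exact Set.disjoint_left.mpr fun ω ha hb => hab (ha.symm.trans hb)
      rw [← measure_iUnion hdisj fun k => hXmeas n (measurableSet_singleton k)]
      have : ⋃ k, X n ⁻¹' {k} = Set.univ := by
        ext ω; simp
      rw [this, measure_univ]
    calc μ (B n q ε) ≤ μ (⋃ k, D k) := measure_mono hBsub
      _ ≤ ∑' k, μ (D k) := measure_iUnion_le _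
      _ ≤ ∑' k, μ (X n ⁻¹' {k}) * ENNReal.ofReal ((C / ε ^ 2) * Real.exp (-q * n)) :=
          ENNReal.tsum_le_tsum hDle
      _ = (∑' k, μ (X n ⁻¹' {k})) * ENNReal.ofReal ((C / ε ^ 2) * Real.exp (-q * n)) :=
          ENNReal.tsum_mul_right
      _ = ENNReal.ofReal ((C / ε ^ 2) * Real.exp (-q * n)) := by rw [hsum1, one_mul]
  -- Borel-Cantelli for each pair of positive rationals
  have hBC : ∀ᵐ ω ∂μ, ∀ p : ℚ × ℚ, 0 < p.1 → 0 < p.2 →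
      ∀ᶠ n in atTop, ω ∉ B n (p.1 : ℝ) (p.2 : ℝ) := by
    rw [ae_all_iff]
    intro p
    by_cases hp1 : 0 < p.1
    · by_cases hp2 : 0 < p.2
      · have hq : (0:ℝ) < (p.1 : ℝ) := by exact_mod_cast hp1
        have hε : (0:ℝ) < (p.2 : ℝ) := by exact_mod_cast hp2
        have hsummable : Summable (fun n : ℕ => (C / (p.2:ℝ) ^ 2) * Real.exp (-(p.1:ℝ) * n)) := by
          apply Summable.mul_left
          have : ∀ n : ℕ, Real.exp (-(p.1:ℝ) * n) = (Real.exp (-(p.1:ℝ))) ^ n := by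
            intro n
            rw [← Real.exp_nat_mul]
            ring_nf
          simp only [this]
          exact summable_geometric_of_lt_one (Real.exp_pos _).le
            (Real.exp_lt_one_iff.mpr (by linarith))
        have hfin : (∑' n, μ (B n (p.1:ℝ) (p.2:ℝ))) ≠ ⊤ := by
          apply ne_top_of_le_ne_top _ (ENNReal.tsum_le_tsum fun n => hBbound n _ _ hq hε)
          rw [← ENNReal.ofReal_tsum_of_nonneg (fun n => by positivity) hsummable]
          exact ENNReal.ofReal_ne_top
        filter_upwards [ae_eventually_notMem hfin] with ω hω _ _ using hω
      · filter_upwards with ω h1 h2; exact absurd h2 hp2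
    · filter_upwards with ω h1 h2; exact absurd h1 hp1
  -- conclusion
  filter_upwards [hBC] with ω hω hc
  obtain ⟨c, hc0, hev⟩ := hc
  obtain ⟨q, hq0, hqc⟩ := exists_rat_btwn hc0
  rw [NormedAddCommGroup.tendsto_nhds_zero]
  intro ε hε
  obtain ⟨ε', hε'0, hε'ε⟩ := exists_rat_btwn hε
  have hq0' : (0:ℚ) < q := by exact_mod_cast hq0
  have hε'0' : (0:ℚ) < ε' := by exact_mod_cast hε'0
  have hX : ∀ᶠ n : ℕ in atTop, Real.exp ((q:ℝ) * n) ≤ (X n ω : ℝ) := by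
    filter_upwards [hev] with n hn
    have hXR : (0:ℝ) < (X n ω : ℝ) := by exact_mod_cast hXpos n ω
    calc Real.exp ((q:ℝ) * n) ≤ Real.exp (c * n) :=
          Real.exp_le_exp.mpr (mul_le_mul_of_nonneg_right hqc.le (Nat.cast_nonneg n))
      _ ≤ Real.exp (Real.log (X n ω)) := Real.exp_le_exp.mpr hn
      _ = (X n ω : ℝ) := Real.exp_log hXR
  filter_upwards [hω (q, ε') hq0' hε'0', hX] with n hn hXn
  have hXR : (0:ℝ) < (X n ω : ℝ) := by exact_mod_cast hXpos n ω
  have hS : |∑ i ∈ Finset.range (X n ω), Y i n ω| < (ε':ℝ) * (X n ω : ℝ) := by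
    by_contra h
    exact hn ⟨hXn, le_of_not_gt h⟩
  have : ‖(∑ i ∈ Finset.range (X n ω), Y i n ω) / (X n ω : ℝ)‖
      = |∑ i ∈ Finset.range (X n ω), Y i n ω| / (X n ω : ℝ) := by
    rw [Real.norm_eq_abs, abs_div, abs_of_pos hXR]
  rw [this, div_lt_iff₀ hXR]
  calc |∑ i ∈ Finset.range (X n ω), Y i n ω| < (ε':ℝ) * (X n ω : ℝ) := hS
    _ ≤ ε * (X n ω : ℝ) := mul_le_mul_of_nonneg_right hε'ε.le hXR.le
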